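/- If a, b ∈ D and a > b, then √(a² − b²) ∈ D. -/

import Mathlib

/-- `φ(p,q) = (p₁−q₁)² + (p₂−q₂)²` for `p, q ∈ ℂ²`. -/
noncomputable def phi2 (p q : Fin 2 → ℂ) : ℂ := (p 0 - q 0) ^ 2 + (p 1 - q 1) ^ 2

/-- `D` is the set of real `d > 0` such that for all `x, y ∈ ℝ²` with `|x−y| = d` there is a
finite set `S` with `{x,y} ⊆ S ⊆ ℝ²` such that every map `f : S → ℂ²` preserving unit
distance (i.e. `φ(f u, f v) = 1` whenever `u, v ∈ S` and `|u−v| = 1`) satisfies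
`φ(f x, f y) = d²`. -/
noncomputable def D : Set ℝ :=
  {d | 0 < d ∧ ∀ x y : EuclideanSpace ℝ (Fin 2), dist x y = d →
    ∃ S : Set (EuclideanSpace ℝ (Fin 2)), S.Finite ∧ x ∈ S ∧ y ∈ S ∧
      ∀ f : EuclideanSpace ℝ (Fin 2) → (Fin 2 → ℂ),
        (∀ u ∈ S, ∀ v ∈ S, dist u v = 1 → phi2 (f u) (f v) = 1) →
        phi2 (f x) (f y) = (d : ℂ) ^ 2}

namespace BQaux

abbrev E2 := EuclideanSpace ℝ (Fin 2)

noncomputable def pt (x y : E2) (α β : ℝ) : E2 :=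
  WithLp.toLp 2 ![x 0 + α*(y 0 - x 0) - β*(y 1 - x 1), x 1 + α*(y 1 - x 1) + β*(y 0 - x 0)]

lemma pt_zero (x y : E2) : pt x y 0 0 = x := by
  ext i; fin_cases i <;> simp [pt]

lemma pt_one (x y : E2) : pt x y 1 0 = y := by
  ext i; fin_cases i <;> simp [pt]

lemma dist_pt (x y : E2) (α β α' β' : ℝ) :
    dist (pt x y α β) (pt x y α' β') =
      Real.sqrt ((α-α')^2 + (β-β')^2) * dist x y := by
  rw [EuclideanSpace.dist_eq, EuclideanSpace.dist_eq, ← Real.sqrt_mul (by positivity)]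
  congr 1
  rw [Fin.sum_univ_two, Fin.sum_univ_two]
  simp only [pt, PiLp.toLp_apply, Real.dist_eq, Matrix.cons_val_zero, Matrix.cons_val_one, Matrix.head_cons,
    sq_abs]
  ring

lemma dist_pt_eq (x y : E2) {L c e : ℝ} (hxy : dist x y = L) (α β α' β' : ℝ)
    (h : (α-α')^2+(β-β')^2 = c) (h2 : Real.sqrt c * L = e) :
    dist (pt x y α β) (pt x y α' β') = e := by
  rw [dist_pt, h, hxy, h2]

lemma sqrt_third_mul (d : ℝ) : Real.sqrt (1/3) * (Real.sqrt 3 * d) = d := by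
  rw [← mul_assoc, ← Real.sqrt_mul (by norm_num)]
  norm_num

lemma cast_sqrt3_sq (d : ℝ) : ((Real.sqrt 3 * d : ℝ) : ℂ)^2 = 3*(d:ℂ)^2 := by
  have h3 : ((Real.sqrt 3 : ℝ) : ℂ)^2 = 3 := by
    rw [← Complex.ofReal_pow, Real.sq_sqrt (by norm_num : (0:ℝ) ≤ 3)]
    norm_num
  push_cast
  rw [mul_pow, h3]

theorem rhombus_alg (X0 X1 Y0 Y1 W0 W1 V0 V1 s : ℂ)
    (h1 : (X0-W0)^2+(X1-W1)^2 = s) (h2 : (X0-V0)^2+(X1-V1)^2 = s)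
    (h3 : (Y0-W0)^2+(Y1-W1)^2 = s) (h4 : (Y0-V0)^2+(Y1-V1)^2 = s)
    (h5 : (W0-V0)^2+(W1-V1)^2 = s) (hs : s ≠ 0) :
    (X0 = Y0 ∧ X1 = Y1) ∨ (X0-Y0)^2+(X1-Y1)^2 = 3*s := by
  set n0 := X0-Y0 with hn0
  set n1 := X1-Y1 with hn1
  set m0 := X0+Y0-W0-V0 with hm0
  set m1 := X1+Y1-W1-V1 with hm1
  have k1 : (V0-W0)*n0 + (V1-W1)*n1 = 0 := by linear_combination (h1-h2-h3+h4)/2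
  have k2 : (V0-W0)*m0 + (V1-W1)*m1 = 0 := by linear_combination (h1-h2+h3-h4)/2
  have k3 : n0*m0 + n1*m1 = 0 := by linear_combination h1 - h3 - k1
  have kr1 : (V1-W1)*(n0*m1 - n1*m0) = 0 := by linear_combination n0*k2 - m0*k1
  have kr0 : (V0-W0)*(n0*m1 - n1*m0) = 0 := by linear_combination m1*k1 - n1*k2
  have kdet : s*(n0*m1 - n1*m0) = 0 := by
    linear_combination (V0-W0)*kr0 + (V1-W1)*kr1 - (n0*m1 - n1*m0)*h5
  have det0 : n0*m1 - n1*m0 = 0 := (mul_eq_zero.mp kdet).resolve_left hs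
  have k5 : m0^2 + m1^2 = 3*s - (n0^2+n1^2) := by
    linear_combination h1 + h2 + h3 + h4 - h5
  have fin0 : (3*s - (n0^2+n1^2))*n0 = 0 := by
    linear_combination m0*k3 + m1*det0 - n0*k5
  have fin1 : (3*s - (n0^2+n1^2))*n1 = 0 := by
    linear_combination m1*k3 - m0*det0 - n1*k5
  by_cases hz : n0 = 0 ∧ n1 = 0
  · exact Or.inl ⟨sub_eq_zero.mp hz.1, sub_eq_zero.mp hz.2⟩
  · right
    have h30 : 3*s - (n0^2+n1^2) = 0 := by
      rcases not_and_or.mp hz with h | h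
      · exact (mul_eq_zero.mp fin0).resolve_right h
      · exact (mul_eq_zero.mp fin1).resolve_right h
    linear_combination -h30

theorem doubling_alg (P0 P1 Q0 Q1 M0 M1 R0 R1 T0 T1 s : ℂ)
    (g1 : (P0-M0)^2+(P1-M1)^2 = s) (g2 : (Q0-M0)^2+(Q1-M1)^2 = s)
    (g3 : (P0-R0)^2+(P1-R1)^2 = s) (g4 : (M0-R0)^2+(M1-R1)^2 = s)
    (g5 : (P0-T0)^2+(P1-T1)^2 = s) (g6 : (M0-T0)^2+(M1-T1)^2 = s)
    (g7 : (R0-Q0)^2+(R1-Q1)^2 = 3*s) (g8 : (T0-Q0)^2+(T1-Q1)^2 = 3*s)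
    (g9 : (R0-T0)^2+(R1-T1)^2 = 3*s) (hs : s ≠ 0) :
    (P0-Q0)^2+(P1-Q1)^2 = 4*s := by
  set w0 := P0+Q0-2*M0 with hw0d
  set w1 := P1+Q1-2*M1 with hw1d
  set r0 := R0-M0 with hr0d
  set r1 := R1-M1 with hr1d
  set t0 := T0-M0 with ht0d
  set t1 := T1-M1 with ht1d
  have a1 : r0*w0 + r1*w1 = 0 := by linear_combination (g1+g2+2*g4-g3-g7)/2
  have a2 : t0*w0 + t1*w1 = 0 := by linear_combination (g1+g2+2*g6-g5-g8)/2
  have a3 : r0*t0 + r1*t1 + s/2 = 0 := by linear_combination (g4+g6-g9)/2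
  set cr := r0*t1 - r1*t0 with hcrd
  have c0 : cr*w0 = 0 := by linear_combination t1*a1 - r1*a2
  have c1 : cr*w1 = 0 := by linear_combination r0*a2 - t0*a1
  have hcross : cr^2 = 3/4*s^2 := by
    linear_combination t0^2*g4 + t1^2*g4 + s*g6 + (s/2 - (r0*t0+r1*t1))*a3
  have hw0 : s^2*w0 = 0 := by linear_combination (4/3)*cr*c0 - (4/3)*w0*hcross
  have hw1 : s^2*w1 = 0 := by linear_combination (4/3)*cr*c1 - (4/3)*w1*hcross
  have hs2 : s^2 ≠ 0 := pow_ne_zero _ hs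
  have w0z : w0 = 0 := (mul_eq_zero.mp hw0).resolve_left hs2
  have w1z : w1 = 0 := (mul_eq_zero.mp hw1).resolve_left hs2
  linear_combination 2*g1 + 2*g2 - w0*w0z - w1*w1z

theorem final_alg (X0 X1 Y0 Y1 Z0 Z1 T0 T1 t q : ℂ)
    (e1 : (Z0-Y0)^2+(Z1-Y1)^2 = t) (e2 : (T0-Y0)^2+(T1-Y1)^2 = t)
    (e3 : (Z0-T0)^2+(Z1-T1)^2 = 4*t)
    (e4 : (X0-Z0)^2+(X1-Z1)^2 = q) (e5 : (X0-T0)^2+(X1-T1)^2 = q)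
    (ht : t ≠ 0) :
    (X0-Y0)^2+(X1-Y1)^2 = q - t := by
  set n0 := Z0+T0-2*Y0 with hn0d
  set n1 := Z1+T1-2*Y1 with hn1d
  set u0 := Z0-Y0 with hu0d
  set u1 := Z1-Y1 with hu1d
  have b1 : n0^2 + n1^2 = 0 := by linear_combination 2*e1 + 2*e2 - e3
  have b2 : u0*n0 + u1*n1 = 0 := by linear_combination (3*e1+e2-e3)/2
  have b3 : t*n0^2 = 0 := by
    linear_combination u1^2*b1 + (u0*n0-u1*n1)*b2 - n0^2*e1
  have b4 : t*n1^2 = 0 := by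
    linear_combination u0^2*b1 + (u1*n1-u0*n0)*b2 - n1^2*e1
  have n0z : n0 = 0 := by
    have := (mul_eq_zero.mp b3).resolve_left ht
    exact pow_eq_zero_iff (n := 2) (by norm_num) |>.mp this
  have n1z : n1 = 0 := by
    have := (mul_eq_zero.mp b4).resolve_left ht
    exact pow_eq_zero_iff (n := 2) (by norm_num) |>.mp this
  have hT0 : T0 = 2*Y0 - Z0 := by linear_combination n0z
  have hT1 : T1 = 2*Y1 - Z1 := by linear_combination n1z
  rw [hT0, hT1] at e5
  linear_combination (e4+e5)/2 - e1

lemma d_sq_ne {d : ℝ} (hd : 0 < d) : ((d:ℝ):ℂ)^2 ≠ 0 :=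
  pow_ne_zero _ (Complex.ofReal_ne_zero.mpr hd.ne')

/-- rhombus dichotomy -/
lemma rhombus_dichotomy {d : ℝ} (hd : d ∈ D) (x y : E2)
    (hxy : dist x y = Real.sqrt 3 * d) :
    ∃ S : Set E2, S.Finite ∧ x ∈ S ∧ y ∈ S ∧
      ∀ f : E2 → (Fin 2 → ℂ),
        (∀ u ∈ S, ∀ v ∈ S, dist u v = 1 → phi2 (f u) (f v) = 1) →
        (f x = f y ∨ phi2 (f x) (f y) = 3*(d:ℂ)^2) := by
  have h3 : (Real.sqrt 3)^2 = 3 := Real.sq_sqrt (by norm_num)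
  set w := pt x y (1/2) (Real.sqrt 3/6) with hw
  set w' := pt x y (1/2) (-(Real.sqrt 3/6)) with hw'
  have c1 : ((0:ℝ)-1/2)^2 + ((0:ℝ)-Real.sqrt 3/6)^2 = 1/3 := by linear_combination h3/36
  have c2 : ((0:ℝ)-1/2)^2 + ((0:ℝ)-(-(Real.sqrt 3/6)))^2 = 1/3 := by linear_combination h3/36
  have c3 : ((1/2:ℝ)-1)^2 + (Real.sqrt 3/6-0)^2 = 1/3 := by linear_combination h3/36
  have c4 : ((1/2:ℝ)-1)^2 + (-(Real.sqrt 3/6)-0)^2 = 1/3 := by linear_combination h3/36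
  have c5 : ((1/2:ℝ)-1/2)^2 + (Real.sqrt 3/6-(-(Real.sqrt 3/6)))^2 = 1/3 := by
    linear_combination h3/9
  have hxw : dist x w = d := by
    have := dist_pt_eq x y hxy 0 0 (1/2) (Real.sqrt 3/6) c1 (sqrt_third_mul d)
    rwa [pt_zero] at this
  have hxw' : dist x w' = d := by
    have := dist_pt_eq x y hxy 0 0 (1/2) (-(Real.sqrt 3/6)) c2 (sqrt_third_mul d)
    rwa [pt_zero] at this
  have hwy : dist w y = d := by
    have := dist_pt_eq x y hxy (1/2) (Real.sqrt 3/6) 1 0 c3 (sqrt_third_mul d)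
    rwa [pt_one] at this
  have hw'y : dist w' y = d := by
    have := dist_pt_eq x y hxy (1/2) (-(Real.sqrt 3/6)) 1 0 c4 (sqrt_third_mul d)
    rwa [pt_one] at this
  have hww' : dist w w' = d :=
    dist_pt_eq x y hxy (1/2) (Real.sqrt 3/6) (1/2) (-(Real.sqrt 3/6)) c5 (sqrt_third_mul d)
  obtain ⟨S1, fS1, m1x, m1w, p1⟩ := hd.2 x w hxw
  obtain ⟨S2, fS2, m2x, m2w, p2⟩ := hd.2 x w' hxw'
  have hyw : dist y w = d := by rw [dist_comm]; exact hwy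
  have hyw' : dist y w' = d := by rw [dist_comm]; exact hw'y
  obtain ⟨S3, fS3, m3y, m3w, p3⟩ := hd.2 y w hyw
  obtain ⟨S4, fS4, m4y, m4w, p4⟩ := hd.2 y w' hyw'
  obtain ⟨S5, fS5, m5w, m5w', p5⟩ := hd.2 w w' hww'
  refine ⟨S1 ∪ S2 ∪ S3 ∪ S4 ∪ S5,
    (((fS1.union fS2).union fS3).union fS4).union fS5,
    by simp [m1x], by simp [m3y], ?_⟩
  intro f hf
  have r1 := p1 f (fun u hu v hv hd1 => hf u (by simp [hu]) v (by simp [hv]) hd1)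
  have r2 := p2 f (fun u hu v hv hd1 => hf u (by simp [hu]) v (by simp [hv]) hd1)
  have r3 := p3 f (fun u hu v hv hd1 => hf u (by simp [hu]) v (by simp [hv]) hd1)
  have r4 := p4 f (fun u hu v hv hd1 => hf u (by simp [hu]) v (by simp [hv]) hd1)
  have r5 := p5 f (fun u hu v hv hd1 => hf u (by simp [hu]) v (by simp [hv]) hd1)
  have := rhombus_alg (f x 0) (f x 1) (f y 0) (f y 1) (f w 0) (f w 1) (f w' 0) (f w' 1)
    (((d:ℝ):ℂ)^2) r1 r2 r3 r4 r5 (d_sq_ne hd.1)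
  rcases this with ⟨e0, e1⟩ | h
  · left; funext i; fin_cases i
    · exact e0
    · exact e1
  · right; exact h

/-- √3·d ∈ D -/
lemma sqrt3_mem {d : ℝ} (hd : d ∈ D) : Real.sqrt 3 * d ∈ D := by
  have h3 : (Real.sqrt 3)^2 = 3 := Real.sq_sqrt (by norm_num)
  have h11 : (Real.sqrt 11)^2 = 11 := Real.sq_sqrt (by norm_num)
  refine ⟨mul_pos (Real.sqrt_pos.mpr (by norm_num)) hd.1, ?_⟩
  intro x y hxy
  set z := pt x y (5/6) (Real.sqrt 11/6) with hz
  have hxz : dist x z = Real.sqrt 3 * d := by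
    have c : ((0:ℝ)-5/6)^2 + ((0:ℝ)-Real.sqrt 11/6)^2 = 1 := by linear_combination h11/36
    have := dist_pt_eq x y (e := Real.sqrt 3 * d) hxy 0 0 (5/6) (Real.sqrt 11/6) c
      (by rw [Real.sqrt_one, one_mul])
    rwa [pt_zero] at this
  have hyz : dist y z = d := by
    have c : ((1:ℝ)-5/6)^2 + ((0:ℝ)-Real.sqrt 11/6)^2 = 1/3 := by linear_combination h11/36
    have := dist_pt_eq x y hxy 1 0 (5/6) (Real.sqrt 11/6) c (sqrt_third_mul d)
    rwa [pt_one] at this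
  obtain ⟨SA, fSA, mAx, mAy, pA⟩ := rhombus_dichotomy hd x y hxy
  obtain ⟨SB, fSB, mBx, mBz, pB⟩ := rhombus_dichotomy hd x z hxz
  obtain ⟨SC, fSC, mCy, mCz, pC⟩ := hd.2 y z hyz
  refine ⟨SA ∪ SB ∪ SC, (fSA.union fSB).union fSC, by simp [mAx], by simp [mAy], ?_⟩
  intro f hf
  have rA := pA f (fun u hu v hv hd1 => hf u (by simp [hu]) v (by simp [hv]) hd1)
  have rB := pB f (fun u hu v hv hd1 => hf u (by simp [hu]) v (by simp [hv]) hd1)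
  have rC := pC f (fun u hu v hv hd1 => hf u (by simp [hu]) v (by simp [hv]) hd1)
  rw [cast_sqrt3_sq]
  rcases rA with h | h
  · exfalso
    rw [h] at rB
    rcases rB with h2 | h2
    · rw [h2] at rC
      have : phi2 (f z) (f z) = 0 := by simp [phi2]
      rw [rC] at this
      exact d_sq_ne hd.1 this
    · have : phi2 (f y) (f z) = 3*((d:ℝ):ℂ)^2 := h2
      rw [rC] at this
      have h0 : ((d:ℝ):ℂ)^2 = 0 := by linear_combination -this/2
      exact d_sq_ne hd.1 h0
  · exact h

/-- 2d ∈ D -/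
lemma two_mem {d : ℝ} (hd : d ∈ D) : 2 * d ∈ D := by
  have h3 : (Real.sqrt 3)^2 = 3 := Real.sq_sqrt (by norm_num)
  have hs3 := sqrt3_mem hd
  refine ⟨by linarith [hd.1], ?_⟩
  intro x y hxy
  set m := pt x y (1/2) 0 with hm
  set r := pt x y (1/4) (Real.sqrt 3/4) with hr
  set r' := pt x y (1/4) (-(Real.sqrt 3/4)) with hr'
  have half_mul : Real.sqrt (1/4) * (2*d) = d := by
    rw [show Real.sqrt (1/4) = 1/2 by
      rw [show (1/4:ℝ) = (1/2)^2 by norm_num, Real.sqrt_sq (by norm_num)]]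
    ring
  have s34_mul : Real.sqrt (3/4) * (2*d) = Real.sqrt 3 * d := by
    rw [show (3/4:ℝ) = 3 * (1/2)^2 by norm_num, Real.sqrt_mul (by norm_num),
      Real.sqrt_sq (by norm_num)]
    ring
  have hxm : dist x m = d := by
    have c : ((0:ℝ)-1/2)^2 + ((0:ℝ)-0)^2 = 1/4 := by norm_num
    have := dist_pt_eq x y hxy 0 0 (1/2) 0 c half_mul
    rwa [pt_zero] at this
  have hym : dist y m = d := by
    have c : ((1:ℝ)-1/2)^2 + ((0:ℝ)-0)^2 = 1/4 := by norm_num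
    have := dist_pt_eq x y hxy 1 0 (1/2) 0 c half_mul
    rwa [pt_one] at this
  have hxr : dist x r = d := by
    have c : ((0:ℝ)-1/4)^2 + ((0:ℝ)-Real.sqrt 3/4)^2 = 1/4 := by linear_combination h3/16
    have := dist_pt_eq x y hxy 0 0 (1/4) (Real.sqrt 3/4) c half_mul
    rwa [pt_zero] at this
  have hmr : dist m r = d := by
    have c : ((1/2:ℝ)-1/4)^2 + ((0:ℝ)-Real.sqrt 3/4)^2 = 1/4 := by linear_combination h3/16
    exact dist_pt_eq x y hxy (1/2) 0 (1/4) (Real.sqrt 3/4) c half_mul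
  have hxr' : dist x r' = d := by
    have c : ((0:ℝ)-1/4)^2 + ((0:ℝ)-(-(Real.sqrt 3/4)))^2 = 1/4 := by linear_combination h3/16
    have := dist_pt_eq x y hxy 0 0 (1/4) (-(Real.sqrt 3/4)) c half_mul
    rwa [pt_zero] at this
  have hmr' : dist m r' = d := by
    have c : ((1/2:ℝ)-1/4)^2 + ((0:ℝ)-(-(Real.sqrt 3/4)))^2 = 1/4 := by
      linear_combination h3/16
    exact dist_pt_eq x y hxy (1/2) 0 (1/4) (-(Real.sqrt 3/4)) c half_mul
  have hry : dist r y = Real.sqrt 3 * d := by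
    have c : ((1/4:ℝ)-1)^2 + (Real.sqrt 3/4-0)^2 = 3/4 := by linear_combination h3/16
    have := dist_pt_eq x y hxy (1/4) (Real.sqrt 3/4) 1 0 c s34_mul
    rwa [pt_one] at this
  have hr'y : dist r' y = Real.sqrt 3 * d := by
    have c : ((1/4:ℝ)-1)^2 + (-(Real.sqrt 3/4)-0)^2 = 3/4 := by linear_combination h3/16
    have := dist_pt_eq x y hxy (1/4) (-(Real.sqrt 3/4)) 1 0 c s34_mul
    rwa [pt_one] at this
  have hrr' : dist r r' = Real.sqrt 3 * d := by
    have c : ((1/4:ℝ)-1/4)^2 + (Real.sqrt 3/4-(-(Real.sqrt 3/4)))^2 = 3/4 := by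
      linear_combination h3/4
    exact dist_pt_eq x y hxy (1/4) (Real.sqrt 3/4) (1/4) (-(Real.sqrt 3/4)) c s34_mul
  obtain ⟨S1, fS1, m1a, m1b, p1⟩ := hd.2 x m hxm
  obtain ⟨S2, fS2, m2a, m2b, p2⟩ := hd.2 y m hym
  obtain ⟨S3, fS3, m3a, m3b, p3⟩ := hd.2 x r hxr
  obtain ⟨S4, fS4, m4a, m4b, p4⟩ := hd.2 m r hmr
  obtain ⟨S5, fS5, m5a, m5b, p5⟩ := hd.2 x r' hxr'
  obtain ⟨S6, fS6, m6a, m6b, p6⟩ := hd.2 m r' hmr'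
  obtain ⟨S7, fS7, m7a, m7b, p7⟩ := hs3.2 r y hry
  obtain ⟨S8, fS8, m8a, m8b, p8⟩ := hs3.2 r' y hr'y
  obtain ⟨S9, fS9, m9a, m9b, p9⟩ := hs3.2 r r' hrr'
  refine ⟨S1 ∪ S2 ∪ S3 ∪ S4 ∪ S5 ∪ S6 ∪ S7 ∪ S8 ∪ S9,
    ((((((((fS1.union fS2).union fS3).union fS4).union fS5).union fS6).union
      fS7).union fS8).union fS9),
    by simp [m1a], by simp [m2a], ?_⟩
  intro f hf
  have r1 := p1 f (fun u hu v hv hd1 => hf u (by simp [hu]) v (by simp [hv]) hd1)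
  have r2 := p2 f (fun u hu v hv hd1 => hf u (by simp [hu]) v (by simp [hv]) hd1)
  have r3 := p3 f (fun u hu v hv hd1 => hf u (by simp [hu]) v (by simp [hv]) hd1)
  have r4 := p4 f (fun u hu v hv hd1 => hf u (by simp [hu]) v (by simp [hv]) hd1)
  have r5 := p5 f (fun u hu v hv hd1 => hf u (by simp [hu]) v (by simp [hv]) hd1)
  have r6 := p6 f (fun u hu v hv hd1 => hf u (by simp [hu]) v (by simp [hv]) hd1)
  have r7 := p7 f (fun u hu v hv hd1 => hf u (by simp [hu]) v (by simp [hv]) hd1)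
  have r8 := p8 f (fun u hu v hv hd1 => hf u (by simp [hu]) v (by simp [hv]) hd1)
  have r9 := p9 f (fun u hu v hv hd1 => hf u (by simp [hu]) v (by simp [hv]) hd1)
  rw [cast_sqrt3_sq] at r7 r8 r9
  have goal := doubling_alg (f x 0) (f x 1) (f y 0) (f y 1) (f m 0) (f m 1)
    (f r 0) (f r 1) (f r' 0) (f r' 1) (((d:ℝ):ℂ)^2)
    r1 r2 r3 r4 r5 r6 r7 r8 r9 (d_sq_ne hd.1)
  have hc : ((2*d : ℝ):ℂ)^2 = 4*((d:ℝ):ℂ)^2 := by push_cast; ring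
  rw [hc]
  exact goal

end BQaux

open BQaux in
theorem sqrt_sub_sq_mem_D {a b : ℝ} (ha : a ∈ D) (hb : b ∈ D) (hab : a > b) :
    Real.sqrt (a ^ 2 - b ^ 2) ∈ D := by
  have hbpos := hb.1
  have hapos := ha.1
  have hd : (0:ℝ) < a^2 - b^2 := by nlinarith
  set c := Real.sqrt (a^2 - b^2) with hc
  have hcpos : 0 < c := Real.sqrt_pos.mpr hd
  have hc2 : c^2 = a^2 - b^2 := Real.sq_sqrt hd.le
  have h2b := two_mem hb
  refine ⟨hcpos, ?_⟩
  intro x y hxy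
  set t := b / c with ht
  have htpos : 0 < t := div_pos hbpos hcpos
  set z := pt x y 1 t with hz
  set z' := pt x y 1 (-t) with hz'
  have hyz : dist y z = b := by
    have cc : ((1:ℝ)-1)^2 + ((0:ℝ)-t)^2 = t^2 := by ring
    have hb2 : Real.sqrt (t^2) * c = b := by
      rw [Real.sqrt_sq htpos.le, ht]; field_simp
    have := dist_pt_eq x y hxy 1 0 1 t cc hb2
    rwa [pt_one] at this
  have hyz' : dist y z' = b := by
    have cc : ((1:ℝ)-1)^2 + ((0:ℝ)-(-t))^2 = t^2 := by ring
    have hb2 : Real.sqrt (t^2) * c = b := by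
      rw [Real.sqrt_sq htpos.le, ht]; field_simp
    have := dist_pt_eq x y hxy 1 0 1 (-t) cc hb2
    rwa [pt_one] at this
  have hzz' : dist z z' = 2*b := by
    have cc : ((1:ℝ)-1)^2 + (t-(-t))^2 = (2*t)^2 := by ring
    have hb2 : Real.sqrt ((2*t)^2) * c = 2*b := by
      rw [Real.sqrt_sq (by linarith), ht]; field_simp
    exact dist_pt_eq x y hxy 1 t 1 (-t) cc hb2
  have hax : Real.sqrt (1 + t^2) * c = a := by
    have e1 : (1 + t^2) * c^2 = a^2 := by
      rw [ht]; field_simp; linarith [hc2]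
    calc Real.sqrt (1 + t^2) * c
        = Real.sqrt (1 + t^2) * Real.sqrt (c^2) := by rw [Real.sqrt_sq hcpos.le]
      _ = Real.sqrt ((1 + t^2) * c^2) := (Real.sqrt_mul (by positivity) _).symm
      _ = Real.sqrt (a^2) := by rw [e1]
      _ = a := Real.sqrt_sq hapos.le
  have hxz : dist x z = a := by
    have cc : ((0:ℝ)-1)^2 + ((0:ℝ)-t)^2 = 1 + t^2 := by ring
    have := dist_pt_eq x y hxy 0 0 1 t cc hax
    rwa [pt_zero] at this
  have hxz' : dist x z' = a := by
    have cc : ((0:ℝ)-1)^2 + ((0:ℝ)-(-t))^2 = 1 + t^2 := by ring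
    have := dist_pt_eq x y hxy 0 0 1 (-t) cc hax
    rwa [pt_zero] at this
  have hzy : dist z y = b := by rw [dist_comm]; exact hyz
  have hzy' : dist z' y = b := by rw [dist_comm]; exact hyz'
  obtain ⟨S1, fS1, m1b, m1a, p1⟩ := hb.2 z y hzy
  obtain ⟨S2, fS2, m2b, m2a, p2⟩ := hb.2 z' y hzy'
  obtain ⟨S3, fS3, m3a, m3b, p3⟩ := h2b.2 z z' hzz'
  obtain ⟨S4, fS4, m4a, m4b, p4⟩ := ha.2 x z hxz
  obtain ⟨S5, fS5, m5a, m5b, p5⟩ := ha.2 x z' hxz'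
  refine ⟨S1 ∪ S2 ∪ S3 ∪ S4 ∪ S5,
    (((fS1.union fS2).union fS3).union fS4).union fS5,
    by simp [m4a], by simp [m1a], ?_⟩
  intro f hf
  have r1 := p1 f (fun u hu v hv hd1 => hf u (by simp [hu]) v (by simp [hv]) hd1)
  have r2 := p2 f (fun u hu v hv hd1 => hf u (by simp [hu]) v (by simp [hv]) hd1)
  have r3 := p3 f (fun u hu v hv hd1 => hf u (by simp [hu]) v (by simp [hv]) hd1)
  have r4 := p4 f (fun u hu v hv hd1 => hf u (by simp [hu]) v (by simp [hv]) hd1)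
  have r5 := p5 f (fun u hu v hv hd1 => hf u (by simp [hu]) v (by simp [hv]) hd1)
  have r3' : (f z 0 - f z' 0)^2 + (f z 1 - f z' 1)^2 = 4*((b:ℝ):ℂ)^2 := by
    have : ((2*b : ℝ):ℂ)^2 = 4*((b:ℝ):ℂ)^2 := by push_cast; ring
    rw [← this]; exact r3
  have goal := final_alg (f x 0) (f x 1) (f y 0) (f y 1) (f z 0) (f z 1)
    (f z' 0) (f z' 1) (((b:ℝ):ℂ)^2) (((a:ℝ):ℂ)^2)
    r1 r2 r3' r4 r5 (d_sq_ne hbpos)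
  have hcast : ((c:ℝ):ℂ)^2 = ((a:ℝ):ℂ)^2 - ((b:ℝ):ℂ)^2 := by
    rw [← Complex.ofReal_pow, hc2]; push_cast; ring
  rw [hcast]
  exact goal
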